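/- Let $\alpha_1\in\mathbb{R}$, $\alpha_1\ne 0$, and $k>0$. Define $a_1:\mathbb{R}\to\mathbb{R}$ by $a_1(z)=\dfrac{\alpha_1\,e^{-\alpha_1^2 z}}{\sqrt{k+e^{-2\alpha_1^2 z}}}$. Then $a_1$ is differentiable and satisfies the ODE $a_1'(z)=\big(a_1(z)^2-\alpha_1^2\big)\,a_1(z)$ for all $z\in\mathbb{R}$, with $\lim_{z\to-\infty}a_1(z)=\alpha_1$ and $\lim_{z\to+\infty}a_1(z)=0$. -/

import Mathlib

open Real Filter

/-- The explicit profile `a₁(z) = α₁ e^{-α₁²z} / √(k + e^{-2α₁²z})` (with `α₁ ≠ 0`, `k > 0`)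
is differentiable, solves `a₁' = (a₁² - α₁²) a₁`, and connects the endstates
`a₁(-∞) = α₁` and `a₁(+∞) = 0`. -/
theorem explicit_shear_profile (α₁ k : ℝ) (hα : α₁ ≠ 0) (hk : 0 < k)
    (a₁ : ℝ → ℝ)
    (ha : ∀ z, a₁ z = α₁ * Real.exp (-(α₁ ^ 2) * z) /
        Real.sqrt (k + Real.exp (-(2 * α₁ ^ 2) * z))) :
    (∀ z, HasDerivAt a₁ ((a₁ z ^ 2 - α₁ ^ 2) * a₁ z) z) ∧
    Filter.Tendsto a₁ Filter.atBot (nhds α₁) ∧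
    Filter.Tendsto a₁ Filter.atTop (nhds 0) := by
  set c : ℝ := α₁ ^ 2 with hc
  have hcpos : 0 < c := by positivity
  have hexp2 : ∀ z : ℝ, Real.exp (-(2 * c) * z) = Real.exp (-c * z) ^ 2 := by
    intro z
    rw [sq, ← Real.exp_add]
    ring_nf
  have hpos : ∀ z : ℝ, 0 < k + Real.exp (-(2 * c) * z) := by
    intro z; positivity
  have hSpos : ∀ z : ℝ, 0 < Real.sqrt (k + Real.exp (-(2 * c) * z)) := by
    intro z; exact Real.sqrt_pos.2 (hpos z)
  refine ⟨?_, ?_, ?_⟩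
  · intro z
    set E := Real.exp (-c * z) with hE
    have hEpos : 0 < E := Real.exp_pos _
    set S := Real.sqrt (k + Real.exp (-(2 * c) * z)) with hS
    have hSp : 0 < S := hSpos z
    have hSsq : S ^ 2 = k + E ^ 2 := by
      rw [hS, Real.sq_sqrt (hpos z).le, hexp2]
    have hd1 : HasDerivAt (fun z : ℝ => -c * z) (-c) z := by
      simpa using (hasDerivAt_id z).const_mul (-c)
    have hd2 : HasDerivAt (fun z : ℝ => -(2 * c) * z) (-(2 * c)) z := by
      simpa using (hasDerivAt_id z).const_mul (-(2 * c))
    have hnum : HasDerivAt (fun z => α₁ * Real.exp (-c * z))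
        (α₁ * (Real.exp (-c * z) * -c)) z := (hd1.exp).const_mul α₁
    have hinner : HasDerivAt (fun z : ℝ => k + Real.exp (-(2 * c) * z))
        (Real.exp (-(2 * c) * z) * -(2 * c)) z := by
      simpa using (hd2.exp).const_add k
    have hden : HasDerivAt (fun z : ℝ => Real.sqrt (k + Real.exp (-(2 * c) * z)))
        (Real.exp (-(2 * c) * z) * -(2 * c) / (2 * S)) z :=
      hinner.sqrt (hpos z).ne'
    have hdiv := hnum.div hden hSp.ne'
    have heq : (fun z => a₁ z) =ᶠ[nhds z]
        (fun y => α₁ * Real.exp (-c * y) / Real.sqrt (k + Real.exp (-(2 * c) * y))) := by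
      filter_upwards with w
      rw [ha w]
    have hmain := hdiv.congr_of_eventuallyEq heq
    refine hmain.congr_deriv ?_
    rw [ha z, ← hS, ← hE, hexp2 z, ← hE]
    field_simp
    rw [hc]
    ring
  · -- limit at -∞
    have halt : ∀ z : ℝ, a₁ z = α₁ / Real.sqrt (k * Real.exp (2 * c * z) + 1) := by
      intro z
      rw [ha z]
      have hEpos : 0 < Real.exp (-c * z) := Real.exp_pos _
      have h3 : Real.exp (-(2 * c) * z) * Real.exp (2 * c * z) = 1 := by
        rw [← Real.exp_add, show -(2 * c) * z + 2 * c * z = 0 by ring, Real.exp_zero]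
      have h1 : k + Real.exp (-(2 * c) * z)
          = Real.exp (-c * z) ^ 2 * (k * Real.exp (2 * c * z) + 1) := by
        rw [← hexp2 z]
        linear_combination (-k) * h3
      rw [h1, Real.sqrt_mul (by positivity), Real.sqrt_sq hEpos.le,
        mul_comm α₁, mul_comm (Real.exp (-c * z)), ← div_div,
        mul_div_assoc, div_self hEpos.ne', mul_one]
    have hlim : Tendsto (fun z : ℝ => k * Real.exp (2 * c * z) + 1) atBot (nhds 1) := by
      have h0 : Tendsto (fun z : ℝ => 2 * c * z) atBot atBot :=
        (tendsto_const_mul_atBot_of_pos (by positivity)).2 tendsto_id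
      have h1 : Tendsto (fun z : ℝ => Real.exp (2 * c * z)) atBot (nhds 0) :=
        Real.tendsto_exp_atBot.comp h0
      have := (h1.const_mul k).add_const 1
      simpa using this
    have h2 : Tendsto (fun z : ℝ => α₁ / Real.sqrt (k * Real.exp (2 * c * z) + 1))
        atBot (nhds (α₁ / Real.sqrt 1)) :=
      tendsto_const_nhds.div ((Real.continuous_sqrt.tendsto 1).comp hlim) (by simp)
    have h3 := h2.congr (fun z => (halt z).symm)
    simpa using h3
  · -- limit at +∞
    have hlimE : Tendsto (fun z : ℝ => Real.exp (-c * z)) atTop (nhds 0) := by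
      have h0 : Tendsto (fun z : ℝ => -c * z) atTop atBot :=
        (tendsto_const_mul_atBot_of_neg (by linarith)).2 tendsto_id
      exact Real.tendsto_exp_atBot.comp h0
    have hlimD : Tendsto (fun z : ℝ => Real.sqrt (k + Real.exp (-(2 * c) * z))) atTop
        (nhds (Real.sqrt k)) := by
      have h0 : Tendsto (fun z : ℝ => -(2 * c) * z) atTop atBot :=
        (tendsto_const_mul_atBot_of_neg (by linarith)).2 tendsto_id
      have h2 : Tendsto (fun z : ℝ => Real.exp (-(2 * c) * z)) atTop (nhds 0) :=
        Real.tendsto_exp_atBot.comp h0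
      have := (Real.continuous_sqrt.tendsto (k + 0)).comp (h2.const_add k)
      simpa [Function.comp_def] using this
    have h2 : Tendsto (fun z : ℝ => α₁ * Real.exp (-c * z) /
        Real.sqrt (k + Real.exp (-(2 * c) * z))) atTop (nhds (α₁ * 0 / Real.sqrt k)) :=
      (tendsto_const_nhds.mul hlimE).div hlimD (by positivity)
    have h3 := h2.congr (fun z => (ha z).symm)
    simpa using h3
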